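/- Let x be a k-cycle and y a permutation in S_n with ‖xy‖ = ‖x‖ + ‖y‖ (transposition lengths add). Then each cycle of y intersects the support of x in at most one point. Conversely, if each cycle of y meets the support of x in at most one point, then ‖xy‖ = ‖x‖ + ‖y‖. -/

import Mathlib

open Equiv Equiv.Perm Finset

variable {α : Type*} [Fintype α] [DecidableEq α]

namespace Stmt16




/-- reflection length -/
def ell (f : Perm α) : ℕ := f.support.card - f.cycleFactorsFinset.card

theorem ell_eq (f : Perm α) :
    f.cycleType.sum - Multiset.card f.cycleType = ell f := by
  rw [sum_cycleType, cycleType_def, Multiset.card_map]; rfl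

theorem card_support_eq_sum (f : Perm α) :
    f.support.card = ∑ c ∈ f.cycleFactorsFinset, c.support.card := by
  rw [← sum_cycleType, cycleType_def]; rfl

theorem ell_eq_sum (f : Perm α) :
    ell f = ∑ c ∈ f.cycleFactorsFinset, (c.support.card - 1) := by
  have h2 : ∀ c ∈ f.cycleFactorsFinset, 1 ≤ c.support.card := fun c hc =>
    le_trans (by norm_num) (mem_cycleFactorsFinset_iff.mp hc).1.two_le_card_support
  have : ∑ c ∈ f.cycleFactorsFinset, (c.support.card - 1) + f.cycleFactorsFinset.card
      = ∑ c ∈ f.cycleFactorsFinset, c.support.card := by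
    rw [Finset.card_eq_sum_ones, ← Finset.sum_add_distrib]
    exact Finset.sum_congr rfl fun c hc => by have := h2 c hc; omega
  rw [ell, card_support_eq_sum]
  omega

theorem ell_cycle {f : Perm α} (hf : f.IsCycle) : ell f = f.support.card - 1 := by
  rw [ell, hf.cycleFactorsFinset_eq_singleton, Finset.card_singleton]

theorem ell_mul_disjoint {f g : Perm α} (h : f.Disjoint g) :
    ell (f * g) = ell f + ell g := by
  rw [ell_eq_sum, ell_eq_sum, ell_eq_sum, h.cycleFactorsFinset_mul_eq_union,
    Finset.sum_union h.disjoint_cycleFactorsFinset]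





theorem merge_one {x c : Perm α} (hx : x.IsCycle) (hc : c.IsCycle) {b : α}
    (hbc : b ∈ c.support) (hbx : b ∈ x.support)
    (h : c.support ∩ x.support ⊆ {b}) :
    (x * c).IsCycle ∧ (x * c).support = x.support ∪ c.support := by
  have uniq : ∀ t, t ∈ c.support → t ∈ x.support → t = b := fun t h1 h2 => by
    simpa using h (Finset.mem_inter.mpr ⟨h1, h2⟩)
  have hsupp : (x * c).support = x.support ∪ c.support := by
    refine le_antisymm (support_mul_le x c) ?_
    intro t ht
    rw [Finset.mem_union] at ht
    rw [mem_support, mul_apply]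
    by_cases htc : t ∈ c.support
    · by_cases hct : c t ∈ x.support
      · have hctb : c t = b := uniq _ (apply_mem_support.mpr htc) hct
        rw [hctb]
        intro hxb
        have : t ∈ x.support := hxb ▸ apply_mem_support.mpr hbx
        have htb : t = b := uniq _ htc this
        rw [htb] at hctb
        exact (mem_support.mp hbc) hctb
      · rw [notMem_support.mp hct]
        exact mem_support.mp htc
    · rw [notMem_support.mp htc]
      exact mem_support.mp (ht.resolve_right htc)
  have step_c : ∀ j : ℕ, (x * c).SameCycle b ((c ^ j) b) := by
    intro j
    induction j with
    | zero => simpa using SameCycle.refl _ b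
    | succ j ih =>
      by_cases hj : (c ^ (j + 1)) b = b
      · rw [hj]
      · have h1 : (c ^ (j + 1)) b ∈ c.support := pow_apply_mem_support.mpr hbc
        have h2 : (c ^ (j + 1)) b ∉ x.support := fun hmem => hj (uniq _ h1 hmem)
        have hkey : (x * c) ((c ^ j) b) = (c ^ (j + 1)) b := by
          rw [mul_apply, ← mul_apply c (c ^ j), ← pow_succ']
          exact notMem_support.mp h2
        exact ih.trans ⟨1, by simpa using hkey⟩
  have reach_c : ∀ t ∈ c.support, (x * c).SameCycle b t := by
    intro t ht
    obtain ⟨j, hj⟩ := hc.exists_pow_eq (mem_support.mp hbc) (mem_support.mp ht)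
    exact hj ▸ step_c j
  have hxb_step : (x * c).SameCycle b (x b) := by
    have h1 : c⁻¹ b ∈ c.support := by
      rw [← support_inv]; exact apply_mem_support.mpr (by rwa [support_inv])
    have h2 : (x * c) (c⁻¹ b) = x b := by rw [mul_apply, ← mul_apply c, mul_inv_cancel, one_apply]
    exact (reach_c _ h1).trans ⟨1, by simpa using h2⟩
  have step_x : ∀ i : ℕ, (x * c).SameCycle (x b) ((x ^ (i + 1)) b) := by
    intro i
    induction i with
    | zero => simpa using SameCycle.refl _ (x b)
    | succ i ih =>
      by_cases hib : (x ^ (i + 1)) b = b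
      · have : (x ^ (i + 2)) b = x b := by
          rw [pow_succ', mul_apply, hib]
        rw [this]
      · have h1 : (x ^ (i + 1)) b ∈ x.support := pow_apply_mem_support.mpr hbx
        have h2 : (x ^ (i + 1)) b ∉ c.support := fun hmem => hib (uniq _ hmem h1)
        have hkey : (x * c) ((x ^ (i + 1)) b) = (x ^ (i + 2)) b := by
          have h3 : (x ^ (i + 2)) b = x ((x ^ (i + 1)) b) := by
            rw [pow_succ' x (i + 1), mul_apply]
          rw [mul_apply, notMem_support.mp h2, ← h3]
        exact ih.trans ⟨1, by simpa using hkey⟩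
  have reach_x : ∀ t ∈ x.support, (x * c).SameCycle b t := by
    intro t ht
    obtain ⟨i, hi⟩ := hx.exists_pow_eq (mem_support.mp hbx) (mem_support.mp ht)
    match i, hi with
    | 0, hi => exact hi ▸ (by simpa using SameCycle.refl _ b)
    | (i + 1), hi => exact hi ▸ (hxb_step.trans (step_x i))
  refine ⟨⟨b, ?_, fun t ht => ?_⟩, hsupp⟩
  · have : b ∈ (x * c).support := hsupp ▸ Finset.mem_union_left _ hbx
    exact mem_support.mp this
  · have : t ∈ (x * c).support := mem_support.mpr ht
    rw [hsupp, Finset.mem_union] at this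
    exact (this.elim (reach_x t) (reach_c t))





theorem merge_many {x : Perm α} (hx : x.IsCycle) :
    ∀ S : Finset (Perm α), ∀ (_ : ∀ c ∈ S, IsCycle c)
      (hdisj : (S : Set (Perm α)).Pairwise Equiv.Perm.Disjoint)
      (_ : ∀ c ∈ S, (c.support ∩ x.support).card = 1),
      (x * S.noncommProd id (hdisj.mono' fun _ _ => Disjoint.commute)).IsCycle ∧
        (x * S.noncommProd id (hdisj.mono' fun _ _ => Disjoint.commute)).support
          = x.support ∪ S.biUnion Equiv.Perm.support ∧
        (x * S.noncommProd id (hdisj.mono' fun _ _ => Disjoint.commute)).support.card + S.card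
          = x.support.card + ∑ c ∈ S, c.support.card := by
  intro S
  induction S using Finset.induction_on with
  | empty =>
    intro _ _ _
    refine ⟨by rw [Finset.noncommProd_empty, mul_one]; exact hx,
      by rw [Finset.noncommProd_empty, mul_one]; simp,
      by rw [Finset.noncommProd_empty, mul_one]; simp⟩
  | @insert c S' hcS' ih =>
    intro hcyc hdisj hone
    have hdisj' : (S' : Set (Perm α)).Pairwise Equiv.Perm.Disjoint :=
      hdisj.mono (by simp only [Finset.coe_insert]; exact Set.subset_insert _ _)
    obtain ⟨hbigcyc, hbigsupp, hbigcard⟩ :=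
      ih (fun d hd => hcyc d (Finset.mem_insert_of_mem hd)) hdisj'
        (fun d hd => hone d (Finset.mem_insert_of_mem hd))
    set big := x * S'.noncommProd id (hdisj'.mono' fun _ _ => Disjoint.commute) with hbig
    have hprod : (insert c S').noncommProd id (hdisj.mono' fun _ _ => Disjoint.commute)
        = S'.noncommProd id (hdisj'.mono' fun _ _ => Disjoint.commute) * c := by
      rw [Finset.noncommProd_insert_of_notMem' _ _ _ _ hcS']
      rfl
    have hmul : x * (insert c S').noncommProd id (hdisj.mono' fun _ _ => Disjoint.commute)
        = big * c := by rw [hprod, hbig, mul_assoc]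
    -- the common point of c and x
    obtain ⟨b, hb⟩ := Finset.card_eq_one.mp (hone c (Finset.mem_insert_self _ _))
    have hbmem : b ∈ c.support ∩ x.support := hb ▸ Finset.mem_singleton_self b
    have hbc : b ∈ c.support := (Finset.mem_inter.mp hbmem).1
    have hbx : b ∈ x.support := (Finset.mem_inter.mp hbmem).2
    have hccyc : c.IsCycle := hcyc c (Finset.mem_insert_self _ _)
    have hcd : ∀ d ∈ S', _root_.Disjoint c.support d.support := by
      intro d hd
      have hne : c ≠ d := fun hcd => hcS' (hcd ▸ hd)
      have := hdisj (Finset.mem_coe.mpr (Finset.mem_insert_self _ _))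
        (Finset.mem_coe.mpr (Finset.mem_insert_of_mem hd)) hne
      exact disjoint_iff_disjoint_support.mp this
    have hsubset : c.support ∩ big.support ⊆ {b} := by
      intro t ht
      rw [Finset.mem_inter, hbigsupp, Finset.mem_union] at ht
      obtain ⟨htc, htx | htS⟩ := ht
      · exact hb ▸ Finset.mem_inter.mpr ⟨htc, htx⟩
      · obtain ⟨d, hd, htd⟩ := Finset.mem_biUnion.mp htS
        exact absurd htc (Finset.disjoint_right.mp (hcd d hd) htd)
    have hbbig : b ∈ big.support := hbigsupp ▸ Finset.mem_union_left _ hbx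
    obtain ⟨hcyc2, hsupp2⟩ := merge_one hbigcyc hccyc hbc hbbig hsubset
    have hinter : big.support ∩ c.support = {b} := by
      refine le_antisymm ?_ ?_
      · intro t ht
        rw [Finset.mem_inter] at ht
        exact hsubset (Finset.mem_inter.mpr ⟨ht.2, ht.1⟩)
      · intro t ht
        rw [Finset.mem_singleton] at ht
        exact ht ▸ Finset.mem_inter.mpr ⟨hbbig, hbc⟩
    refine ⟨hmul ▸ hcyc2, ?_, ?_⟩
    · rw [hmul, hsupp2, hbigsupp, Finset.biUnion_insert]
      ext t; simp only [Finset.mem_union]; tauto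
    · rw [hmul, Finset.sum_insert hcS', Finset.card_insert_of_notMem hcS']
      have hcu := Finset.card_union_add_card_inter big.support c.support
      rw [hinter, Finset.card_singleton, ← hsupp2] at hcu
      omega





theorem sameCycle_of_disjoint_right {C w : Perm α} (h : C.Disjoint w) {s t : α}
    (hs : s ∈ C.support) (hsc : C.SameCycle s t) : (C * w).SameCycle s t := by
  obtain ⟨i, hi⟩ := hsc
  refine ⟨i, ?_⟩
  rw [h.commute.mul_zpow, mul_apply]
  have hws : (w ^ i) s = s := by
    apply notMem_support.mp
    intro hmem
    have hsw : s ∈ w.support := support_zpow_le w i hmem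
    exact (Finset.disjoint_left.mp (disjoint_iff_disjoint_support.mp h) hs) hsw
  rw [hws, hi]

theorem structure_lemma {x y : Perm α} (hx : x.IsCycle)
    (h : ∀ c ∈ y.cycleFactorsFinset, (c.support ∩ x.support).card ≤ 1) :
    ell (x * y) = ell x + ell y ∧
      ∀ c ∈ y.cycleFactorsFinset, (c.support ∩ x.support).Nonempty →
        ∀ s ∈ x.support, ∀ t ∈ c.support, (x * y).SameCycle s t := by
  classical
  set T := y.cycleFactorsFinset.filter (fun c => (c.support ∩ x.support).Nonempty) with hTdef
  set U := y.cycleFactorsFinset.filter (fun c => ¬(c.support ∩ x.support).Nonempty) with hUdef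
  have hTF : T ⊆ y.cycleFactorsFinset := Finset.filter_subset _ _
  have hUF : U ⊆ y.cycleFactorsFinset := Finset.filter_subset _ _
  have hTU : _root_.Disjoint T U := Finset.disjoint_filter_filter_not _ _ _
  have hTUunion : T ∪ U = y.cycleFactorsFinset := Finset.filter_union_filter_not_eq _ _
  have hFdisj := cycleFactorsFinset_pairwise_disjoint y
  have hTdisj : (T : Set (Perm α)).Pairwise Equiv.Perm.Disjoint :=
    hFdisj.mono (Finset.coe_subset.mpr hTF)
  have hUdisj : (U : Set (Perm α)).Pairwise Equiv.Perm.Disjoint :=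
    hFdisj.mono (Finset.coe_subset.mpr hUF)
  have hTcyc : ∀ c ∈ T, c.IsCycle := fun c hc =>
    (mem_cycleFactorsFinset_iff.mp (hTF hc)).1
  have hUcyc : ∀ c ∈ U, c.IsCycle := fun c hc =>
    (mem_cycleFactorsFinset_iff.mp (hUF hc)).1
  have hTone : ∀ c ∈ T, (c.support ∩ x.support).card = 1 := by
    intro c hc
    have h1 := h c (hTF hc)
    have h2 : 0 < (c.support ∩ x.support).card :=
      Finset.card_pos.mpr (Finset.mem_filter.mp hc).2
    omega
  obtain ⟨hCcyc, hCsupp, hCcard⟩ := merge_many hx T hTcyc hTdisj hTone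
  set z := T.noncommProd id (hTdisj.mono' fun _ _ => Disjoint.commute) with hz
  set w := U.noncommProd id (hUdisj.mono' fun _ _ => Disjoint.commute) with hw
  have hwsupp : w.support = U.biUnion Equiv.Perm.support := support_noncommProd hUdisj
  have hy : z * w = y := by
    obtain ⟨-, hpair, hprod⟩ := cycleFactorsFinset_eq_finset.mp hTUunion.symm
    rw [Finset.noncommProd_union_of_disjoint hTU] at hprod
    exact hprod
  have hwfact : w.cycleFactorsFinset = U :=
    cycleFactorsFinset_eq_finset.mpr ⟨hUcyc, hUdisj, rfl⟩
  have hdisjCw : (x * z).Disjoint w := by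
    rw [disjoint_iff_disjoint_support, hCsupp, hwsupp, Finset.disjoint_left]
    intro a ha hb
    obtain ⟨d, hdU, had⟩ := Finset.mem_biUnion.mp hb
    rcases Finset.mem_union.mp ha with hax | haT
    · exact (Finset.mem_filter.mp hdU).2 ⟨a, Finset.mem_inter.mpr ⟨had, hax⟩⟩
    · obtain ⟨e, heT, hae⟩ := Finset.mem_biUnion.mp haT
      have hne : e ≠ d := fun hed => (Finset.disjoint_left.mp hTU) heT (hed ▸ hdU)
      have hdisj_ed := hFdisj (Finset.mem_coe.mpr (hTF heT)) (Finset.mem_coe.mpr (hUF hdU)) hne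
      exact (Finset.disjoint_left.mp (disjoint_iff_disjoint_support.mp hdisj_ed) hae) had
  have hxy : x * y = (x * z) * w := by rw [← hy, mul_assoc]
  have e1 : ell (x * y) = ell (x * z) + ell w := by rw [hxy, ell_mul_disjoint hdisjCw]
  have e2 : ell (x * z) = (x * z).support.card - 1 := ell_cycle hCcyc
  have e3 : ell w = ∑ c ∈ U, (c.support.card - 1) := by rw [ell_eq_sum, hwfact]
  have e4 : ell y = ∑ c ∈ T, (c.support.card - 1) + ∑ c ∈ U, (c.support.card - 1) := by
    rw [ell_eq_sum, ← hTUunion, Finset.sum_union hTU]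
  have e5 : ell x = x.support.card - 1 := ell_cycle hx
  have e6 : ∑ c ∈ T, (c.support.card - 1) + T.card = ∑ c ∈ T, c.support.card := by
    rw [Finset.card_eq_sum_ones, ← Finset.sum_add_distrib]
    refine Finset.sum_congr rfl fun c hc => ?_
    have := (hTcyc c hc).two_le_card_support
    omega
  have hk := hx.two_le_card_support
  constructor
  · set A := (x * z).support.card
    set B := ∑ c ∈ T, (c.support.card - 1)
    set D := ∑ c ∈ U, (c.support.card - 1)
    set E := ∑ c ∈ T, c.support.card
    omega
  · intro c hc hne s hs t ht
    have hcT : c ∈ T := Finset.mem_filter.mpr ⟨hc, hne⟩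
    have hsC : s ∈ (x * z).support := hCsupp ▸ Finset.mem_union_left _ hs
    have htC : t ∈ (x * z).support :=
      hCsupp ▸ Finset.mem_union_right _ (Finset.mem_biUnion.mpr ⟨c, hcT, ht⟩)
    have hsc : (x * z).SameCycle s t :=
      hCcyc.sameCycle (mem_support.mp hsC) (mem_support.mp htC)
    rw [hxy]
    exact sameCycle_of_disjoint_right hdisjCw hsC hsc





theorem sameCycle_of_mem_factor {y c : Perm α} (hc : c ∈ y.cycleFactorsFinset)
    {a b : α} (ha : a ∈ c.support) (hb : b ∈ c.support) : y.SameCycle a b := by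
  have hca : c = y.cycleOf a := cycle_is_cycleOf ha hc
  have := hca ▸ hb
  exact (mem_support_cycleOf_iff.mp this).1

theorem ell_swap {a b : α} (hab : a ≠ b) : ell (swap a b) = 1 := by
  rw [ell_cycle (isCycle_swap hab), support_swap hab]
  simp [Finset.card_insert_of_notMem, hab]

/-- merge: multiplying by a transposition joining two different orbits adds 1. -/
theorem merge_swap {a b : α} (hab : a ≠ b) {y : Perm α} (h : ¬y.SameCycle a b) :
    ell (swap a b * y) = 1 + ell y := by
  have hcond : ∀ c ∈ y.cycleFactorsFinset, (c.support ∩ (swap a b).support).card ≤ 1 := by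
    intro c hc
    by_contra hgt
    push_neg at hgt
    have hsub : c.support ∩ (swap a b).support ⊆ (swap a b).support :=
      Finset.inter_subset_right
    have hcard2 : ((swap a b).support).card = 2 := by
      rw [support_swap hab]; simp [Finset.card_insert_of_notMem, hab]
    have heq : c.support ∩ (swap a b).support = (swap a b).support := by
      apply Finset.eq_of_subset_of_card_le hsub
      omega
    have hac : a ∈ c.support := by
      have : a ∈ (swap a b).support := by rw [support_swap hab]; simp
      have := heq ▸ this
      exact (Finset.mem_inter.mp this).1
    have hbc : b ∈ c.support := by
      have : b ∈ (swap a b).support := by rw [support_swap hab]; simp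
      have := heq ▸ this
      exact (Finset.mem_inter.mp this).1
    exact h (sameCycle_of_mem_factor hc hac hbc)
  have := (structure_lemma (isCycle_swap hab) hcond).1
  rw [this, ell_swap hab]

/-- multiplying by a transposition cutting an orbit does not re-merge it. -/
theorem no_remerge {y : Perm α} {a b : α} (hab : a ≠ b) (h : y.SameCycle a b) :
    ¬(swap a b * y).SameCycle a b := by
  set z := swap a b * y with hz
  -- there is a power sending b into {a, b}
  have hex : ∃ p : ℕ, (y ^ (p + 1)) b = a ∨ (y ^ (p + 1)) b = b := by
    obtain ⟨i, _, hi⟩ := h.symm.exists_pow_eq'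
    match i, hi with
    | 0, hi => exact absurd hi.symm hab
    | (p + 1), hi => exact ⟨p, Or.inl hi⟩
  set q := Nat.find hex with hq
  have hqspec := Nat.find_spec hex
  have hqmin : ∀ j < q, ¬((y ^ (j + 1)) b = a ∨ (y ^ (j + 1)) b = b) :=
    fun j hj => Nat.find_min hex hj
  -- periodicity helper
  have hper : ∀ m r : ℕ, (y ^ (q + 1)) b = b → (y ^ (m * (q + 1) + r)) b = (y ^ r) b := by
    intro m r hb
    induction m with
    | zero => simp
    | succ m ih =>
      have : (m + 1) * (q + 1) + r = (m * (q + 1) + r) + (q + 1) := by ring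
      rw [this, pow_add, mul_apply, hb, ih]
  -- the key claim: y ^ (q+1) b = a
  have hqa : (y ^ (q + 1)) b = a := by
    rcases hqspec with hqa | hqb
    · exact hqa
    · exfalso
      obtain ⟨i, _, hi⟩ := h.symm.exists_pow_eq'
      have hi0 : i ≠ 0 := fun h0 => hab (h0 ▸ hi).symm
      have hdiv : i = i / (q + 1) * (q + 1) + i % (q + 1) := by
        rw [Nat.mul_comm]; exact (Nat.div_add_mod i (q + 1)).symm
      have hr : (y ^ (i % (q + 1))) b = a := by
        rw [← hper (i / (q + 1)) (i % (q + 1)) hqb, ← hdiv]; exact hi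
      have hrlt : i % (q + 1) ≤ q := Nat.lt_succ_iff.mp (Nat.mod_lt _ (Nat.succ_pos q))
      have hr0 : i % (q + 1) ≠ 0 := fun h0 => hab (h0 ▸ hr).symm
      have : i % (q + 1) - 1 < q := by omega
      refine hqmin _ this (Or.inl ?_)
      have : i % (q + 1) - 1 + 1 = i % (q + 1) := by omega
      rw [this]; exact hr
  -- the invariant set
  have hinv : ∀ t : α, (∃ j ≤ q, (y ^ j) b = t) → ∃ j ≤ q, (y ^ j) b = z t := by
    rintro t ⟨j, hj, rfl⟩
    rcases lt_or_eq_of_le hj with hjq | hjq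
    · refine ⟨j + 1, hjq, ?_⟩
      have hne := hqmin j hjq
      push_neg at hne
      rw [hz, mul_apply, ← mul_apply y (y ^ j), ← pow_succ']
      rw [swap_apply_of_ne_of_ne hne.1 hne.2]
    · refine ⟨0, Nat.zero_le _, ?_⟩
      subst hjq
      rw [hz, mul_apply, ← mul_apply y (y ^ q), ← pow_succ', hqa, swap_apply_left]
      simp
  have hnotin : ∀ j ≤ q, (y ^ j) b ≠ a := by
    intro j hj hja
    have hj0 : j ≠ 0 := fun h0 => hab (h0 ▸ hja).symm
    have hlt : j - 1 < q := by omega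
    refine hqmin _ hlt (Or.inl ?_)
    have : j - 1 + 1 = j := by omega
    rw [this]; exact hja
  intro hSC
  obtain ⟨i, _, hi⟩ := hSC.symm.exists_pow_eq'
  have hiS : ∀ i : ℕ, ∃ j ≤ q, (y ^ j) b = (z ^ i) b := by
    intro i
    induction i with
    | zero => exact ⟨0, Nat.zero_le _, by simp⟩
    | succ i ih =>
      have := hinv _ ih
      rw [← mul_apply z (z ^ i), ← pow_succ'] at this
      exact this
  obtain ⟨j, hj, hjb⟩ := hiS i
  exact hnotin j hj (hjb.trans hi)





theorem split_swap {a b : α} (hab : a ≠ b) {y : Perm α} (h : y.SameCycle a b) :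
    ell y = 1 + ell (swap a b * y) := by
  have h2 := no_remerge hab h
  conv_lhs => rw [← swap_mul_self_mul a b y]
  exact merge_swap hab h2

theorem swap_bound {a b : α} (hab : a ≠ b) (y : Perm α) :
    ell (swap a b * y) ≤ ell y + 1 := by
  by_cases hsc : y.SameCycle a b
  · have := split_swap hab hsc
    omega
  · have := merge_swap hab hsc
    omega

theorem cycle_apply_apply_ne {x : Perm α} (hx : x.IsCycle) (h3 : 3 ≤ x.support.card)
    {a : α} (ha : x a ≠ a) : x (x a) ≠ a := by
  intro heq
  have hxa2 : (x ^ 2) a = a := by rw [pow_two, mul_apply, heq]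
  have hx2 : x ^ 2 = 1 := by
    ext t
    simp only [one_apply]
    by_cases htx : x t = t
    · rw [pow_two, mul_apply, htx, htx]
    · obtain ⟨i, hi⟩ := hx.exists_pow_eq ha htx
      subst hi
      rw [← mul_apply, ← pow_add, Nat.add_comm 2 i, pow_add, mul_apply]
      congr 1
  have hdvd : orderOf x ∣ 2 := orderOf_dvd_of_pow_eq_one hx2
  rw [hx.orderOf] at hdvd
  have := Nat.le_of_dvd (by norm_num) hdvd
  omega

theorem support_card_swap_mul {x : Perm α} {a : α} (ha : x a ≠ a) (hffa : x (x a) ≠ a) :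
    (swap a (x a) * x).support = x.support \ {a} ∧
      (swap a (x a) * x).support.card = x.support.card - 1 := by
  have hs := support_swap_mul_eq x a hffa
  refine ⟨hs, ?_⟩
  rw [hs, Finset.sdiff_singleton_eq_erase, Finset.card_erase_of_mem (mem_support.mpr ha)]

theorem sub_cycle : ∀ k : ℕ, ∀ x : Perm α, x.IsCycle → x.support.card = k →
    ∀ z : Perm α, ell (x * z) ≤ (k - 1) + ell z := by
  intro k
  induction k using Nat.strong_induction_on with
  | _ k ih =>
  intro x hx hk z
  have hk2 : 2 ≤ k := hk ▸ hx.two_le_card_support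
  rcases Nat.lt_or_ge k 3 with hk3 | hk3
  · -- k = 2, x is a swap
    have hk2' : x.support.card = 2 := by omega
    obtain ⟨a, b, hab, rfl⟩ := card_support_eq_two.mp hk2'
    have := swap_bound hab z
    omega
  · obtain ⟨a, ha, -⟩ := id hx
    have hffa := cycle_apply_apply_ne hx (hk ▸ hk3) ha
    obtain ⟨hs, hcard⟩ := support_card_swap_mul ha hffa
    have hx' : (swap a (x a) * x).IsCycle := hx.swap_mul ha hffa
    have hxeq : x = swap a (x a) * (swap a (x a) * x) := (swap_mul_self_mul a (x a) x).symm
    have h1 : ell (x * z) = ell (swap a (x a) * (swap a (x a) * x * z)) := by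
      conv_lhs => rw [hxeq]
      rw [mul_assoc, mul_assoc]
    have h2 := swap_bound (Ne.symm ha) ((swap a (x a) * x) * z)
    have h3 := ih (k - 1) (by omega) _ hx' (by omega) z
    omega

theorem forward_aux : ∀ k : ℕ, ∀ x y : Perm α, x.IsCycle → x.support.card = k →
    ell (x * y) = ell x + ell y →
    ∀ c ∈ y.cycleFactorsFinset, (c.support ∩ x.support).card ≤ 1 := by
  intro k
  induction k using Nat.strong_induction_on with
  | _ k ih =>
  intro x y hx hk hadd c hc
  by_contra hgt
  push_neg at hgt
  have hk2 : 2 ≤ k := hk ▸ hx.two_le_card_support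
  rcases Nat.lt_or_ge k 3 with hk3 | hk3
  · -- k = 2 : x is a swap
    have hk2' : x.support.card = 2 := by omega
    obtain ⟨a, b, hab, rfl⟩ := card_support_eq_two.mp hk2'
    have heq : c.support ∩ (swap a b).support = (swap a b).support :=
      Finset.eq_of_subset_of_card_le Finset.inter_subset_right (by omega)
    have hac : a ∈ c.support := by
      have h1 : a ∈ (swap a b).support := by rw [support_swap hab]; simp
      exact (Finset.mem_inter.mp (heq ▸ h1)).1
    have hbc : b ∈ c.support := by
      have h1 : b ∈ (swap a b).support := by rw [support_swap hab]; simp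
      exact (Finset.mem_inter.mp (heq ▸ h1)).1
    have hSC := sameCycle_of_mem_factor hc hac hbc
    have hsplit := split_swap hab hSC
    rw [ell_swap hab] at hadd
    omega
  · -- k ≥ 3
    obtain ⟨a, ha, -⟩ := id hx
    have hffa := cycle_apply_apply_ne hx (hk ▸ hk3) ha
    obtain ⟨hs, hcard⟩ := support_card_swap_mul ha hffa
    set x' := swap a (x a) * x with hx'def
    have hx' : x'.IsCycle := hx.swap_mul ha hffa
    have hxeq : x = swap a (x a) * x' := (swap_mul_self_mul a (x a) x).symm
    have h1 : ell (x * y) = ell (swap a (x a) * (x' * y)) := by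
      conv_lhs => rw [hxeq]
      rw [mul_assoc]
    have h2 := swap_bound (Ne.symm ha) (x' * y)
    have h3 := sub_cycle (k - 1) x' hx' (by omega) y
    rw [ell_cycle hx, hk] at hadd
    -- ell (x' * y) = (k - 2) + ell y
    have heq' : ell (x' * y) = (k - 1 - 1) + ell y := by omega
    have hcond' : ∀ d ∈ y.cycleFactorsFinset, (d.support ∩ x'.support).card ≤ 1 := by
      refine ih (k - 1) (by omega) x' y hx' (by omega) ?_
      rw [ell_cycle hx', hcard, hk]
      exact heq'
    -- a is in the support of c
    have hac : a ∈ c.support := by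
      by_contra hac
      have hsub : c.support ∩ x.support ⊆ c.support ∩ x'.support := by
        intro t ht
        obtain ⟨htc, htx⟩ := Finset.mem_inter.mp ht
        refine Finset.mem_inter.mpr ⟨htc, ?_⟩
        rw [hs, Finset.mem_sdiff, Finset.mem_singleton]
        exact ⟨htx, fun hta => hac (hta ▸ htc)⟩
      have := Finset.card_le_card hsub
      have := hcond' c hc
      omega
    -- c touches supp x'
    have htouch : (c.support ∩ x'.support).Nonempty := by
      obtain ⟨u, hu, v, hv, huv⟩ := Finset.one_lt_card.mp hgt
      rcases eq_or_ne u a with rfl | hua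
      · refine ⟨v, ?_⟩
        obtain ⟨hvc, hvx⟩ := Finset.mem_inter.mp hv
        refine Finset.mem_inter.mpr ⟨hvc, ?_⟩
        rw [hs, Finset.mem_sdiff, Finset.mem_singleton]
        exact ⟨hvx, fun h => huv h.symm⟩
      · refine ⟨u, ?_⟩
        obtain ⟨huc, hux⟩ := Finset.mem_inter.mp hu
        refine Finset.mem_inter.mpr ⟨huc, ?_⟩
        rw [hs, Finset.mem_sdiff, Finset.mem_singleton]
        exact ⟨hux, hua⟩
    -- x a ∈ supp x'
    have hxa : x a ∈ x'.support := by
      rw [hs, Finset.mem_sdiff, Finset.mem_singleton]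
      exact ⟨apply_mem_support.mpr (mem_support.mpr ha), ha⟩
    have hsc := (structure_lemma hx' hcond').2 c hc htouch (x a) hxa a hac
    have hsc' : (x' * y).SameCycle a (x a) := hsc.symm
    have hsplit := split_swap (Ne.symm ha) hsc'
    -- hsplit : ell (x' * y) = 1 + ell (swap a (x a) * (x' * y)); h1 closes via omega
    omega


end Stmt16

/-- Let `x` be a cycle and `y` a permutation in `S_n`, and write
`‖π‖ = π.cycleType.sum − #cycles(π)` for the reflection length. Then
`‖x·y‖ = ‖x‖ + ‖y‖` if and only if each cycle of `y` intersects the support of `x`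
in at most one point. -/
theorem stmt16 (n : ℕ) (x y : Equiv.Perm (Fin n)) (hx : x.IsCycle) :
    (x * y).cycleType.sum - Multiset.card (x * y).cycleType =
        (x.cycleType.sum - Multiset.card x.cycleType) +
          (y.cycleType.sum - Multiset.card y.cycleType) ↔
      ∀ c ∈ y.cycleFactorsFinset, (c.support ∩ x.support).card ≤ 1 := by
  rw [Stmt16.ell_eq, Stmt16.ell_eq, Stmt16.ell_eq]
  constructor
  · exact fun h => Stmt16.forward_aux x.support.card x y hx rfl h
  · exact fun h => (Stmt16.structure_lemma hx h).1
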